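/- Let d ≥ 2, y₁, …, yₙ ∈ ℝ^d mutually distinct, c₁, …, cₙ ∈ ℂ, and let Θ ⊆ S^{d-1} be a nonempty open subset of the unit sphere. If u(θ) = Σⱼ cⱼ·exp(i·yⱼ·θ) vanishes for all θ ∈ Θ, then u vanishes on all of S^{d-1}, and hence all cⱼ = 0. -/

import Mathlib

open scoped RealInnerProductSpace
open Filter Topology MeasureTheory

lemma exists_unit_orthogonal {d : ℕ} (hd : 2 ≤ d) (w : EuclideanSpace ℝ (Fin d)) :
    ∃ v : EuclideanSpace ℝ (Fin d), ‖v‖ = 1 ∧ ⟪w, v⟫ = 0 := by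
  set K : Submodule ℝ (EuclideanSpace ℝ (Fin d)) := ℝ ∙ w with hK
  have h1 : Module.finrank ℝ K ≤ 1 := (finrank_span_le_card ({w} : Set (EuclideanSpace ℝ (Fin d)))).trans (by simp)
  have h2 : Module.finrank ℝ K + Module.finrank ℝ Kᗮ = d := by
    simpa using K.finrank_add_finrank_orthogonal
  have h3 : Kᗮ ≠ ⊥ := by
    intro hb
    rw [hb] at h2
    simp at h2
    omega
  obtain ⟨x, hxK, hx0⟩ := Submodule.exists_mem_ne_zero_of_ne_bot h3
  refine ⟨‖x‖⁻¹ • x, norm_smul_inv_norm hx0, ?_⟩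
  have : ⟪w, x⟫ = 0 := Submodule.mem_orthogonal_singleton_iff_inner_right.mp hxK
  rw [real_inner_smul_right, this, mul_zero]

lemma entire_zero_of_zero_on_interval (f : ℂ → ℂ) (hf : Differentiable ℂ f)
    (t₀ ε : ℝ) (hε : 0 < ε) (h : ∀ t : ℝ, |t - t₀| < ε → f t = 0) (z : ℂ) : f z = 0 := by
  have hA : AnalyticOnNhd ℂ f Set.univ := (hf.differentiableOn).analyticOnNhd isOpen_univ
  have hfreq : ∃ᶠ w in 𝓝[≠] (t₀ : ℂ), f w = 0 := by
    have hseq : Tendsto (fun k : ℕ => ((t₀ + ε / (k + 2) : ℝ) : ℂ)) atTop (𝓝[≠] (t₀ : ℂ)) := by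
      apply tendsto_nhdsWithin_of_tendsto_nhds_of_eventually_within
      · have : Tendsto (fun k : ℕ => (t₀ + ε / (k + 2) : ℝ)) atTop (𝓝 t₀) := by
          have h0 : Tendsto (fun k : ℕ => (ε / (k + 2) : ℝ)) atTop (𝓝 0) := by
            apply Tendsto.div_atTop tendsto_const_nhds
            exact tendsto_atTop_add_const_right atTop 2 tendsto_natCast_atTop_atTop
          simpa using tendsto_const_nhds.add h0
        exact (Complex.continuous_ofReal.tendsto t₀).comp this
      · filter_upwards with k
        simp only [Set.mem_compl_iff, Set.mem_singleton_iff]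
        intro hc
        have : (t₀ + ε / (k + 2) : ℝ) = t₀ := by exact_mod_cast hc
        have : (ε / (k + 2) : ℝ) = 0 := by linarith
        have : (0:ℝ) < ε / (k + 2) := by positivity
        linarith
    apply hseq.frequently
    apply Frequently.of_forall
    intro k
    apply h
    have h1 : (0:ℝ) < ε / (k + 2) := by positivity
    have h2 : (ε / (k + 2) : ℝ) < ε := by
      apply div_lt_self hε
      have : (0:ℝ) ≤ (k:ℝ) := Nat.cast_nonneg k
      linarith
    rw [abs_sub_lt_iff]; constructor <;> linarith
  have := hA.eqOn_zero_of_preconnected_of_frequently_eq_zero isPreconnected_univ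
    (Set.mem_univ (t₀ : ℂ)) hfreq
  exact this (Set.mem_univ z)

lemma coeffs_zero : ∀ (n : ℕ) (b : Fin n → ℝ) (c : Fin n → ℂ) (g : Fin n → ℝ → ℂ),
    Function.Injective b → (∀ j s, ‖g j s‖ = 1) →
    (∀ s : ℝ, ∑ j, c j * g j s * Real.exp (b j * s) = 0) → ∀ j, c j = 0 := by
  intro n
  induction n with
  | zero => intro _ _ _ _ _ _ j; exact j.elim0
  | succ n ih =>
    intro b c g hb hg hsum
    obtain ⟨j₀, hj₀⟩ := Finite.exists_max b
    have hcj₀ : c j₀ = 0 := by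
      have key : ∀ s : ℝ, ‖c j₀‖ ≤
          ∑ j ∈ Finset.univ.erase j₀, ‖c j‖ * Real.exp ((b j - b j₀) * s) := by
        intro s
        have h1 : c j₀ * g j₀ s * Real.exp (b j₀ * s)
            + ∑ j ∈ Finset.univ.erase j₀, c j * g j s * Real.exp (b j * s) = 0 := by
          have h0 := hsum s
          rwa [← Finset.add_sum_erase _ (fun j => c j * g j s * (Real.exp (b j * s) : ℂ))
            (Finset.mem_univ j₀)] at h0
        have h2 : ‖c j₀‖ * Real.exp (b j₀ * s)
            ≤ ∑ j ∈ Finset.univ.erase j₀, ‖c j‖ * Real.exp (b j * s) := by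
          have := congrArg norm (eq_neg_of_add_eq_zero_left h1)
          rw [norm_neg] at this
          calc ‖c j₀‖ * Real.exp (b j₀ * s)
              = ‖c j₀ * g j₀ s * (Real.exp (b j₀ * s) : ℂ)‖ := by
                rw [norm_mul, norm_mul, hg, mul_one, Complex.norm_real,
                  Real.norm_eq_abs, Real.abs_exp]
            _ ≤ ∑ j ∈ Finset.univ.erase j₀, ‖c j * g j s * (Real.exp (b j * s) : ℂ)‖ := by
                rw [this]; exact norm_sum_le _ _
            _ = ∑ j ∈ Finset.univ.erase j₀, ‖c j‖ * Real.exp (b j * s) := by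
                apply Finset.sum_congr rfl; intro j _
                rw [norm_mul, norm_mul, hg, mul_one, Complex.norm_real,
                  Real.norm_eq_abs, Real.abs_exp]
        rw [← mul_le_mul_iff_of_pos_right (Real.exp_pos (b j₀ * s))]
        calc ‖c j₀‖ * Real.exp (b j₀ * s)
            ≤ ∑ j ∈ Finset.univ.erase j₀, ‖c j‖ * Real.exp (b j * s) := h2
          _ = (∑ j ∈ Finset.univ.erase j₀, ‖c j‖ * Real.exp ((b j - b j₀) * s))
              * Real.exp (b j₀ * s) := by
              rw [Finset.sum_mul]
              apply Finset.sum_congr rfl; intro j _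
              rw [mul_assoc, ← Real.exp_add]
              congr 2
              ring
      have T : Tendsto (fun s : ℝ => ∑ j ∈ Finset.univ.erase j₀,
          ‖c j‖ * Real.exp ((b j - b j₀) * s)) atTop (𝓝 0) := by
        have : (0:ℝ) = ∑ j ∈ Finset.univ.erase j₀, (0:ℝ) := by simp
        rw [this]
        apply tendsto_finset_sum
        intro j hj
        have hlt : b j - b j₀ < 0 := by
          have hne : b j ≠ b j₀ := fun h => (Finset.mem_erase.mp hj).1 (hb h)
          have := hj₀ j
          cases lt_or_eq_of_le this with
          | inl h => linarith
          | inr h => exact absurd h hne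
        have : Tendsto (fun s : ℝ => Real.exp ((b j - b j₀) * s)) atTop (𝓝 0) :=
          Real.tendsto_exp_atBot.comp ((tendsto_const_mul_atBot_of_neg hlt).mpr tendsto_id)
        simpa using this.const_mul ‖c j‖
      have h0 : ‖c j₀‖ ≤ 0 := ge_of_tendsto' T key
      exact norm_eq_zero.mp (le_antisymm h0 (norm_nonneg _))
    intro j
    by_cases hj : j = j₀
    · rw [hj]; exact hcj₀
    · obtain ⟨i, rfl⟩ := Fin.exists_succAbove_eq hj
      refine ih (b ∘ Fin.succAbove j₀) (c ∘ Fin.succAbove j₀) (g ∘ Fin.succAbove j₀)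
        (hb.comp Fin.succAbove_right_injective)
        (fun j s => hg _ s) (fun s => ?_) i
      have := hsum s
      rw [Fin.sum_univ_succAbove _ j₀, hcj₀] at this
      simpa using this

lemma exists_unit_sep {d n : ℕ} (hd : 2 ≤ d) (y : Fin n → EuclideanSpace ℝ (Fin d))
    (hy : Function.Injective y) :
    ∃ w : EuclideanSpace ℝ (Fin d), ‖w‖ = 1 ∧
      Function.Injective (fun j => (⟪y j, w⟫ : ℝ)) := by
  by_cases hn : ∀ j k : Fin n, j = k
  · refine ⟨EuclideanSpace.single ⟨0, by omega⟩ 1, ?_, fun a b _ => hn a b⟩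
    simp [EuclideanSpace.norm_single]
  · push_neg at hn
    obtain ⟨j₁, k₁, hjk₁⟩ := hn
    set S : Set (EuclideanSpace ℝ (Fin d)) :=
      ⋃ j, ⋃ k, ⋃ (_ : j ≠ k), ((ℝ ∙ (y j - y k))ᗮ : Set (EuclideanSpace ℝ (Fin d))) with hS
    have hSnull : volume S = 0 := by
      refine measure_iUnion_null fun j => measure_iUnion_null fun k =>
        measure_iUnion_null fun hjk => ?_
      apply Measure.addHaar_submodule
      intro htop
      have hmem : y j - y k ∈ (ℝ ∙ (y j - y k))ᗮ := by rw [htop]; trivial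
      have := Submodule.mem_orthogonal_singleton_iff_inner_right.mp hmem
      have hne : y j - y k ≠ 0 := sub_ne_zero.mpr (fun h => hjk (hy h))
      exact hne (inner_self_eq_zero.mp this)
    have hx : ∃ x : EuclideanSpace ℝ (Fin d), x ∉ S := by
      by_contra hc
      push_neg at hc
      have : (Set.univ : Set (EuclideanSpace ℝ (Fin d))) ⊆ S := fun x _ => hc x
      have h1 : volume (Set.univ : Set (EuclideanSpace ℝ (Fin d))) = 0 :=
        le_antisymm (hSnull ▸ measure_mono this) zero_le
      have h2 : (0:ENNReal) < volume (Set.univ : Set (EuclideanSpace ℝ (Fin d))) :=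
        isOpen_univ.measure_pos volume ⟨0, trivial⟩
      rw [h1] at h2; exact lt_irrefl 0 h2
    obtain ⟨x, hxS⟩ := hx
    have hkey : ∀ j k : Fin n, j ≠ k → (⟪y j - y k, x⟫ : ℝ) ≠ 0 := by
      intro j k hjk hinner
      exact hxS (Set.mem_iUnion.mpr ⟨j, Set.mem_iUnion.mpr ⟨k, Set.mem_iUnion.mpr
        ⟨hjk, Submodule.mem_orthogonal_singleton_iff_inner_right.mpr hinner⟩⟩⟩)
    have hx0 : x ≠ 0 := by
      intro h0
      exact hkey j₁ k₁ hjk₁ (by rw [h0]; exact inner_zero_right _)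
    refine ⟨‖x‖⁻¹ • x, norm_smul_inv_norm hx0, ?_⟩
    intro a b hab
    by_contra hne
    apply hkey a b hne
    simp only [real_inner_smul_right] at hab
    have h3 : (⟪y a, x⟫ : ℝ) = ⟪y b, x⟫ := by
      have hninv : (‖x‖⁻¹ : ℝ) ≠ 0 := inv_ne_zero (norm_ne_zero_iff.mpr hx0)
      exact mul_left_cancel₀ hninv hab
    rw [inner_sub_left, h3, sub_self]


lemma circle_norm {d : ℕ} (v w : EuclideanSpace ℝ (Fin d)) (hv : ‖v‖ = 1) (hw : ‖w‖ = 1)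
    (hvw : ⟪v, w⟫ = 0) (t : ℝ) : ‖Real.cos t • v + Real.sin t • w‖ = 1 := by
  have hsq : ‖Real.cos t • v + Real.sin t • w‖ ^ 2 = 1 := by
    rw [norm_add_sq_real, real_inner_smul_left, real_inner_smul_right, hvw,
      norm_smul, norm_smul, hv, hw]
    simp only [Real.norm_eq_abs, mul_one]
    nlinarith [Real.sin_sq_add_cos_sq t, sq_abs (Real.cos t), sq_abs (Real.sin t)]
  rw [← Real.sqrt_sq (norm_nonneg _), hsq, Real.sqrt_one]

lemma circle_vanish {d n : ℕ} (y : Fin n → EuclideanSpace ℝ (Fin d)) (c : Fin n → ℂ)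
    (v w : EuclideanSpace ℝ (Fin d))
    (ε : ℝ) (hε : 0 < ε)
    (hzero : ∀ t : ℝ, |t| < ε → ∑ j, c j * Complex.exp (Complex.I *
      ((⟪y j, Real.cos t • v + Real.sin t • w⟫ : ℝ) : ℂ)) = 0) (z : ℂ) :
    ∑ j, c j * Complex.exp (Complex.I * (((⟪y j, v⟫ : ℝ) : ℂ) * Complex.cos z
      + ((⟪y j, w⟫ : ℝ) : ℂ) * Complex.sin z)) = 0 := by
  set G : ℂ → ℂ := fun z => ∑ j, c j * Complex.exp (Complex.I * (((⟪y j, v⟫ : ℝ) : ℂ) *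
    Complex.cos z + ((⟪y j, w⟫ : ℝ) : ℂ) * Complex.sin z)) with hG
  have hdiff : Differentiable ℂ G := by
    apply Differentiable.fun_sum
    intro j _
    apply Differentiable.mul (differentiable_const _)
    apply Differentiable.cexp
    apply Differentiable.mul (differentiable_const _)
    exact ((differentiable_const _).mul Complex.differentiable_cos).add
      ((differentiable_const _).mul Complex.differentiable_sin)
  have hreal : ∀ t : ℝ, |t| < ε → G t = 0 := by
    intro t ht
    rw [hG]
    have := hzero t ht
    rw [← this]
    apply Finset.sum_congr rfl
    intro j _
    congr 1
    have hinner : (⟪y j, Real.cos t • v + Real.sin t • w⟫ : ℝ)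
        = Real.cos t * ⟪y j, v⟫ + Real.sin t * ⟪y j, w⟫ := by
      rw [inner_add_right, real_inner_smul_right, real_inner_smul_right]
    rw [hinner]
    push_cast
    ring_nf
  have := entire_zero_of_zero_on_interval G hdiff 0 ε hε (by simpa using hreal) z
  simpa [hG] using this
/-- If `u(θ) = ∑ⱼ cⱼ exp(i yⱼ·θ)` (distinct `yⱼ`, `d ≥ 2`) vanishes on a nonempty
relatively open subset `Θ` of the unit sphere, then `u` vanishes on the whole sphere and
all `cⱼ = 0`. -/
theorem stmt13 (d n : ℕ) (hd : 2 ≤ d) (y : Fin n → EuclideanSpace ℝ (Fin d))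
    (hy : Function.Injective y) (c : Fin n → ℂ)
    (Θ : Set (EuclideanSpace ℝ (Fin d))) (hΘne : Θ.Nonempty)
    (hΘopen : ∃ V : Set (EuclideanSpace ℝ (Fin d)), IsOpen V ∧
      Θ = V ∩ Metric.sphere (0 : EuclideanSpace ℝ (Fin d)) 1)
    (h : ∀ θ ∈ Θ, ∑ j, c j * Complex.exp (Complex.I * (⟪y j, θ⟫ : ℝ)) = 0) :
    (∀ θ : EuclideanSpace ℝ (Fin d), ‖θ‖ = 1 →
      ∑ j, c j * Complex.exp (Complex.I * (⟪y j, θ⟫ : ℝ)) = 0) ∧ ∀ j, c j = 0 := by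
  obtain ⟨V, hVopen, hVeq⟩ := hΘopen
  obtain ⟨θ₀, hθ₀Θ⟩ := hΘne
  have hθ₀V : θ₀ ∈ V := by rw [hVeq] at hθ₀Θ; exact hθ₀Θ.1
  have hθ₀n : ‖θ₀‖ = 1 := by
    rw [hVeq] at hθ₀Θ
    simpa [mem_sphere_zero_iff_norm] using hθ₀Θ.2
  have claim1 : ∀ θ : EuclideanSpace ℝ (Fin d), ‖θ‖ = 1 →
      ∑ j, c j * Complex.exp (Complex.I * ((⟪y j, θ⟫ : ℝ) : ℂ)) = 0 := by
    intro θ hθ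
    obtain ⟨v, hv1, hv2, t₁, ht₁⟩ : ∃ v : EuclideanSpace ℝ (Fin d), ‖v‖ = 1 ∧
        (⟪θ₀, v⟫ : ℝ) = 0 ∧ ∃ t₁ : ℝ, θ = Real.cos t₁ • θ₀ + Real.sin t₁ • v := by
      have hale : |(⟪θ₀, θ⟫ : ℝ)| ≤ 1 := by
        have h2 := abs_real_inner_le_norm θ₀ θ
        rwa [hθ₀n, hθ, one_mul] at h2
      set a : ℝ := ⟪θ₀, θ⟫ with ha
      set p := θ - a • θ₀ with hp
      have hθ₀p : (⟪θ₀, p⟫ : ℝ) = 0 := by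
        rw [hp, inner_sub_right, real_inner_smul_right, real_inner_self_eq_norm_sq, hθ₀n,
          ← ha]
        ring
      have hpnorm : ‖p‖ ^ 2 = 1 - a ^ 2 := by
        rw [hp, norm_sub_sq_real, real_inner_smul_right, norm_smul, hθ, hθ₀n,
          real_inner_comm θ₀ θ, ← ha]
        simp only [Real.norm_eq_abs, mul_one]
        nlinarith [sq_abs a]
      by_cases hp0 : p = 0
      · obtain ⟨v, hv1, hv2⟩ := exists_unit_orthogonal hd θ₀
        have hθeq : θ = a • θ₀ := by
          rw [hp] at hp0
          exact sub_eq_zero.mp hp0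
        have ha2 : (a - 1) * (a + 1) = 0 := by
          have h0 : ‖p‖ ^ 2 = 0 := by rw [hp0]; simp
          nlinarith [hpnorm]
        rcases mul_eq_zero.mp ha2 with h1 | h1
        · have ha1 : a = 1 := by linarith
          exact ⟨v, hv1, hv2, 0, by simp [hθeq, ha1]⟩
        · have ha1 : a = -1 := by linarith
          refine ⟨v, hv1, hv2, Real.pi, ?_⟩
          rw [hθeq, ha1, Real.cos_pi, Real.sin_pi]
          simp
      · refine ⟨‖p‖⁻¹ • p, norm_smul_inv_norm hp0, ?_, Real.arccos a, ?_⟩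
        · rw [real_inner_smul_right, hθ₀p, mul_zero]
        · rw [Real.cos_arccos (by linarith [abs_le.mp hale |>.1]) (abs_le.mp hale |>.2),
            Real.sin_arccos]
          have hsq : Real.sqrt (1 - a ^ 2) = ‖p‖ := by
            rw [← hpnorm, Real.sqrt_sq (norm_nonneg _)]
          rw [hsq, smul_smul, mul_inv_cancel₀ (norm_ne_zero_iff.mpr hp0), one_smul, hp,
            add_comm, sub_add_cancel]
    have hcont : Continuous fun t : ℝ => Real.cos t • θ₀ + Real.sin t • v :=
      (Real.continuous_cos.smul continuous_const).add
        (Real.continuous_sin.smul continuous_const)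
    obtain ⟨ε, hε, hball⟩ := Metric.isOpen_iff.mp (hVopen.preimage hcont) 0
      (by simpa using hθ₀V)
    have hzero : ∀ t : ℝ, |t| < ε → ∑ j, c j * Complex.exp (Complex.I *
        ((⟪y j, Real.cos t • θ₀ + Real.sin t • v⟫ : ℝ) : ℂ)) = 0 := by
      intro t ht
      apply h
      rw [hVeq]
      refine ⟨hball ?_, ?_⟩
      · simpa [Real.dist_eq] using ht
      · rw [mem_sphere_zero_iff_norm]
        exact circle_norm θ₀ v hθ₀n hv1 hv2 t
    have hz := circle_vanish y c θ₀ v ε hε hzero (↑t₁)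
    rw [← Complex.ofReal_cos, ← Complex.ofReal_sin] at hz
    rw [ht₁]
    refine Eq.trans (Finset.sum_congr rfl fun j _ => ?_) hz
    congr 2
    rw [inner_add_right, real_inner_smul_right, real_inner_smul_right]
    push_cast
    ring
  refine ⟨claim1, ?_⟩
  obtain ⟨w, hw1, hwinj⟩ := exists_unit_sep hd y hy
  obtain ⟨v, hv1, hv2⟩ := exists_unit_orthogonal hd w
  have hvw : (⟪v, w⟫ : ℝ) = 0 := by rw [real_inner_comm]; exact hv2
  have hzero : ∀ t : ℝ, |t| < 1 → ∑ j, c j * Complex.exp (Complex.I *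
      ((⟪y j, Real.cos t • v + Real.sin t • w⟫ : ℝ) : ℂ)) = 0 := fun t _ =>
    claim1 _ (circle_norm v w hv1 hw1 hvw t)
  have hG : ∀ z : ℂ, ∑ j, c j * Complex.exp (Complex.I * (((⟪y j, v⟫ : ℝ) : ℂ) * Complex.cos z
      + ((⟪y j, w⟫ : ℝ) : ℂ) * Complex.sin z)) = 0 :=
    circle_vanish y c v w 1 one_pos hzero
  apply coeffs_zero n (fun j => -(⟪y j, w⟫ : ℝ)) c
    (fun j s => Complex.exp (Complex.I * ((⟪y j, v⟫ : ℝ) : ℂ) *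
      ((Real.cosh (Real.arsinh s) : ℝ) : ℂ)))
  · intro j₁ j₂ h12
    exact hwinj (neg_injective h12)
  · intro j s
    rw [Complex.norm_exp]
    norm_num [Complex.mul_re, Complex.mul_im]
  · intro s
    have hz := hG ((Real.arsinh s : ℂ) * Complex.I)
    refine Eq.trans (Finset.sum_congr rfl fun j _ => ?_) hz
    rw [Complex.cos_mul_I, Complex.sin_mul_I, ← Complex.ofReal_cosh, ← Complex.ofReal_sinh,
      Real.sinh_arsinh]
    have harg : Complex.I * (((⟪y j, v⟫ : ℝ) : ℂ) * ((Real.cosh (Real.arsinh s) : ℝ) : ℂ)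
        + ((⟪y j, w⟫ : ℝ) : ℂ) * ((s : ℂ) * Complex.I))
        = Complex.I * ((⟪y j, v⟫ : ℝ) : ℂ) * ((Real.cosh (Real.arsinh s) : ℝ) : ℂ)
          + ((-(⟪y j, w⟫ : ℝ) * s : ℝ) : ℂ) := by
      push_cast
      linear_combination (((⟪y j, w⟫ : ℝ) : ℂ) * (s : ℂ)) * Complex.I_sq
    rw [harg, Complex.exp_add, Complex.ofReal_exp]
    ring
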